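/- Let X be a nontrivial real or complex Banach space such that every P ∈ 𝒫(ᵏX : X) is a limit of strongly norm-attaining k-homogeneous polynomials (e.g., X has the Radon–Nikodým property). If |x*(x)| = 1 for every x ∈ ρ̃𝒫(ᵏX) and every extreme point x* of B_{X*}, then n^(k)(X) = 1. -/

import Mathlib

open Metric Filter Topology Set

/-- The sup norm of a function over the closed unit ball. -/
noncomputable def supNorm {X Y : Type*} [NormedAddCommGroup X] [NormedAddCommGroup Y]
    (f : X → Y) : ℝ :=
  sSup ((fun x => ‖f x‖) '' Metric.closedBall (0 : X) 1)

/-- `f` strongly attains its (sup) norm at `x₀`: every maximizing sequence in the closed unit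
ball has a subsequence converging to a unimodular multiple of `x₀`. -/
def StronglyAttains (𝕂 : Type*) [RCLike 𝕂] {X Y : Type*} [NormedAddCommGroup X]
    [NormedSpace 𝕂 X] [NormedAddCommGroup Y] (f : X → Y) (x₀ : X) : Prop :=
  ∀ xs : ℕ → X, (∀ n, xs n ∈ Metric.closedBall (0 : X) 1) →
    Tendsto (fun n => ‖f (xs n)‖) atTop (nhds (supNorm f)) →
    ∃ (α : 𝕂) (φ : ℕ → ℕ), StrictMono φ ∧ ‖α‖ = 1 ∧
      Tendsto (fun n => xs (φ n)) atTop (nhds (α • x₀))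

/-- The `k`-homogeneous polynomial associated to a continuous `k`-multilinear map. -/
noncomputable def polyEval {𝕂 : Type*} [RCLike 𝕂] {X Y : Type*} [NormedAddCommGroup X]
    [NormedSpace 𝕂 X] [NormedAddCommGroup Y] [NormedSpace 𝕂 Y] {k : ℕ}
    (L : ContinuousMultilinearMap 𝕂 (fun _ : Fin k => X) Y) : X → Y :=
  fun x => L (fun _ => x)

/-- The set `ρ̃𝒫(ᵏX)` of points of the closed unit ball at which some nonzero bounded
`k`-homogeneous scalar polynomial strongly attains its norm. -/
def polyAttainPts (𝕂 : Type*) [RCLike 𝕂] (X : Type*) [NormedAddCommGroup X]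
    [NormedSpace 𝕂 X] (k : ℕ) : Set X :=
  {x₀ | x₀ ∈ Metric.closedBall (0 : X) 1 ∧
    ∃ L : ContinuousMultilinearMap 𝕂 (fun _ : Fin k => X) 𝕂,
      polyEval L ≠ 0 ∧ StronglyAttains 𝕂 (polyEval L) x₀}

/-- Numerical radius `v(f) = sup { |x*(f x)| : (x, x*) ∈ Π(X) }`. -/
noncomputable def numRadius (𝕂 : Type*) [RCLike 𝕂] {X : Type*} [NormedAddCommGroup X]
    [NormedSpace 𝕂 X] (f : X → X) : ℝ :=
  sSup {r | ∃ (x : X) (x' : X →L[𝕂] 𝕂), ‖x‖ = 1 ∧ ‖x'‖ = 1 ∧ x' x = 1 ∧ r = ‖x' (f x)‖}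

/-- The `k`-polynomial numerical index `n^(k)(X)`. -/
noncomputable def polyNumIndex (𝕂 : Type*) [RCLike 𝕂] (X : Type*) [NormedAddCommGroup X]
    [NormedSpace 𝕂 X] (k : ℕ) : ℝ :=
  sInf {r | ∃ L : ContinuousMultilinearMap 𝕂 (fun _ : Fin k => X) X,
    supNorm (polyEval L) = 1 ∧ r = numRadius 𝕂 (polyEval L)}

/-- The numerical index `n(X)` of a Banach space. -/
noncomputable def numIndex (𝕂 : Type*) [RCLike 𝕂] (X : Type*) [NormedAddCommGroup X]
    [NormedSpace 𝕂 X] : ℝ :=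
  sInf {r | ∃ T : X →L[𝕂] X, ‖T‖ = 1 ∧ r = numRadius 𝕂 (⇑T)}

/-- `x` is an extreme point of the convex set `s` : `y + z = 2x` with `y, z ∈ s` forces
`y = z = x`. -/
def IsExtremePt {E : Type*} [AddCommGroup E] (s : Set E) (x : E) : Prop :=
  x ∈ s ∧ ∀ y ∈ s, ∀ z ∈ s, y + z = x + x → y = x ∧ z = x

/-- `x` is a strongly exposed point of the closed unit ball. -/
def StronglyExposedPt (𝕂 : Type*) [RCLike 𝕂] {X : Type*} [NormedAddCommGroup X]
    [NormedSpace 𝕂 X] (x : X) : Prop :=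
  x ∈ Metric.closedBall (0 : X) 1 ∧ ∃ x' : X →L[𝕂] 𝕂, x' ≠ 0 ∧ ‖x'‖ ≤ 1 ∧
    (∀ y ∈ Metric.closedBall (0 : X) 1, RCLike.re (x' y) ≤ RCLike.re (x' x)) ∧
    ∀ xs : ℕ → X, (∀ n, xs n ∈ Metric.closedBall (0 : X) 1) →
      Tendsto (fun n => RCLike.re (x' (xs n))) atTop (nhds (RCLike.re (x' x))) →
      Tendsto xs atTop (nhds x)

/-- `x'` is a weak-* exposed point of the dual unit ball. -/
def WeakStarExposed (𝕂 : Type*) [RCLike 𝕂] {X : Type*} [NormedAddCommGroup X]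
    [NormedSpace 𝕂 X] (x' : X →L[𝕂] 𝕂) : Prop :=
  ‖x'‖ ≤ 1 ∧ ∃ x ∈ Metric.closedBall (0 : X) 1, x' x = 1 ∧
    ∀ y' : X →L[𝕂] 𝕂, ‖y'‖ ≤ 1 → y' x = 1 → y' = x'

/-- `f` is a strong peak function at `x₀`: `f` is nonzero on the ball and every maximizing
sequence in the closed unit ball converges to `x₀`. -/
def StrongPeakAt {X Y : Type*} [NormedAddCommGroup X] [NormedAddCommGroup Y]
    (f : X → Y) (x₀ : X) : Prop :=
  (∃ x ∈ Metric.closedBall (0 : X) 1, f x ≠ 0) ∧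
    ∀ xs : ℕ → X, (∀ n, xs n ∈ Metric.closedBall (0 : X) 1) →
      Tendsto (fun n => ‖f (xs n)‖) atTop (nhds (supNorm f)) →
      Tendsto xs atTop (nhds x₀)

/-- Complex extreme point of the closed unit ball. -/
def ComplexExtremePoint {X : Type*} [NormedAddCommGroup X] [NormedSpace ℂ X] (x : X) : Prop :=
  x ∈ Metric.closedBall (0 : X) 1 ∧
    ∀ y : X, (∀ θ : ℝ, ‖x + Complex.exp (θ * Complex.I) • y‖ ≤ 1) → y = 0

/-- Membership in `A_b(B_X : Y)`: bounded, continuous on the closed unit ball and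
holomorphic on the open unit ball. -/
def MemAb {X Y : Type*} [NormedAddCommGroup X] [NormedSpace ℂ X] [NormedAddCommGroup Y]
    [NormedSpace ℂ Y] (f : X → Y) : Prop :=
  ContinuousOn f (Metric.closedBall (0 : X) 1) ∧
    (∃ C, ∀ x ∈ Metric.closedBall (0 : X) 1, ‖f x‖ ≤ C) ∧
    DifferentiableOn ℂ f (Metric.ball (0 : X) 1)

/-- Membership in `A_u(B_X : Y)`: additionally uniformly continuous on the closed ball. -/
def MemAu {X Y : Type*} [NormedAddCommGroup X] [NormedSpace ℂ X] [NormedAddCommGroup Y]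
    [NormedSpace ℂ Y] (f : X → Y) : Prop :=
  MemAb f ∧ UniformContinuousOn f (Metric.closedBall (0 : X) 1)

/-- The set `ρA_u(B_X)` of strong peak points of `A_u(B_X)`. -/
def strongPeakPtsAu (X : Type*) [NormedAddCommGroup X] [NormedSpace ℂ X] : Set X :=
  {x₀ | ∃ f : X → ℂ, MemAu f ∧ StrongPeakAt f x₀}

/-- The holomorphic numerical index `n_u(X)`. -/
noncomputable def holNumIndex (X : Type*) [NormedAddCommGroup X] [NormedSpace ℂ X] : ℝ :=
  sInf {r | ∃ f : X → X, MemAu f ∧ supNorm f = 1 ∧ r = numRadius ℂ f}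

/-! ### Auxiliary lemmas for Statement 6 -/

section Statement6Aux

variable {𝕂 X Y : Type*} [RCLike 𝕂] [NormedAddCommGroup X] [NormedSpace 𝕂 X]
  [NormedAddCommGroup Y] [NormedSpace 𝕂 Y]

noncomputable instance : LocallyConvexSpace ℝ (WeakDual 𝕂 X) := WeakBilin.locallyConvexSpace

lemma eq_ofReal_of_re_eq_norm' {w : 𝕂} (h : RCLike.re w = ‖w‖) : w = (‖w‖ : 𝕂) := by
  have h2 : ‖w‖ ^ 2 = RCLike.re w * RCLike.re w + RCLike.im w * RCLike.im w :=
    RCLike.norm_sq_eq_def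
  rw [sq, h] at h2
  have him : RCLike.im w = 0 := by
    have h3 : RCLike.im w * RCLike.im w = 0 := by linarith
    exact mul_self_eq_zero.mp h3
  apply RCLike.ext <;> simp [him, ← h]

/-- Any nonzero vector admits a norming functional which is an extreme point of the dual
unit ball; this is the Krein–Milman theorem applied to the weak-* compact face
`{x* ∈ B_{X*} : x*(v) = ‖v‖}` of `B_{X*}`. -/
lemma exists_extreme_functional' [CompleteSpace X] (v : X) (hv : v ≠ 0) :
    ∃ e : X →L[𝕂] 𝕂, IsExtremePt (Metric.closedBall (0 : X →L[𝕂] 𝕂) 1) e ∧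
      e v = (‖v‖ : 𝕂) := by
  set s : Set (WeakDual 𝕂 X) :=
    (WeakDual.toStrongDual ⁻¹' Metric.closedBall 0 1) ∩
      ((fun φ : WeakDual 𝕂 X => φ v) ⁻¹' {(‖v‖ : 𝕂)}) with hs
  have hcomp : IsCompact s :=
    (WeakDual.isCompact_closedBall (𝕜 := 𝕂) 0 1).inter_right
      (isClosed_singleton.preimage (WeakDual.eval_continuous v))
  have hne : s.Nonempty := by
    obtain ⟨g, hg1, hgv⟩ := exists_dual_vector 𝕂 v (norm_ne_zero_iff.mpr hv)
    refine ⟨StrongDual.toWeakDual g, ?_, ?_⟩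
    · simp [mem_closedBall_zero_iff, hg1]
    · simpa using hgv
  obtain ⟨e, he⟩ := hcomp.extremePoints_nonempty hne
  rw [mem_extremePoints] at he
  have hev : (WeakDual.toStrongDual e) v = (‖v‖ : 𝕂) := he.1.2
  have hev2 : e v = (‖v‖ : 𝕂) := hev
  have hball : WeakDual.toStrongDual e ∈ Metric.closedBall (0 : X →L[𝕂] 𝕂) 1 := he.1.1
  refine ⟨WeakDual.toStrongDual e, ⟨hball, ?_⟩, hev⟩
  intro y hy z hz hsum
  have hyv1 : y v + z v = (‖v‖ : 𝕂) + (‖v‖ : 𝕂) := by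
    have := congrArg (fun w : X →L[𝕂] 𝕂 => w v) hsum
    simpa [hev2] using this
  have hkey : ∀ w : X →L[𝕂] 𝕂, w ∈ Metric.closedBall (0 : X →L[𝕂] 𝕂) 1 →
      ‖v‖ ≤ RCLike.re (w v) → w v = (‖v‖ : 𝕂) := by
    intro w hw hre
    have hw1 : ‖w‖ ≤ 1 := mem_closedBall_zero_iff.mp hw
    have h1 : ‖w v‖ ≤ ‖v‖ := by
      calc ‖w v‖ ≤ ‖w‖ * ‖v‖ := w.le_opNorm v
        _ ≤ 1 * ‖v‖ := by gcongr
        _ = ‖v‖ := one_mul _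
    have h2 : RCLike.re (w v) ≤ ‖w v‖ := RCLike.re_le_norm _
    have h3 : RCLike.re (w v) = ‖w v‖ := le_antisymm h2 (le_trans h1 hre)
    have h4 : ‖w v‖ = ‖v‖ := le_antisymm h1 (le_trans hre h2)
    rw [← h4]
    exact eq_ofReal_of_re_eq_norm' h3
  have hrey : RCLike.re (y v) + RCLike.re (z v) = ‖v‖ + ‖v‖ := by
    have := congrArg RCLike.re hyv1
    simpa [map_add] using this
  have hzle : RCLike.re (z v) ≤ ‖v‖ := by
    have hz1 : ‖z‖ ≤ 1 := mem_closedBall_zero_iff.mp hz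
    calc RCLike.re (z v) ≤ ‖z v‖ := RCLike.re_le_norm _
      _ ≤ ‖z‖ * ‖v‖ := z.le_opNorm v
      _ ≤ 1 * ‖v‖ := by gcongr
      _ = ‖v‖ := one_mul _
  have hyle : RCLike.re (y v) ≤ ‖v‖ := by
    have hy1 : ‖y‖ ≤ 1 := mem_closedBall_zero_iff.mp hy
    calc RCLike.re (y v) ≤ ‖y v‖ := RCLike.re_le_norm _
      _ ≤ ‖y‖ * ‖v‖ := y.le_opNorm v
      _ ≤ 1 * ‖v‖ := by gcongr
      _ = ‖v‖ := one_mul _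
  have hyv : y v = (‖v‖ : 𝕂) := hkey y hy (by linarith)
  have hzv : z v = (‖v‖ : 𝕂) := hkey z hz (by linarith)
  have hys : StrongDual.toWeakDual y ∈ s := ⟨by simpa using hy, by simpa using hyv⟩
  have hzs : StrongDual.toWeakDual z ∈ s := ⟨by simpa using hz, by simpa using hzv⟩
  have hmidC : (2⁻¹ : ℝ) • y + (2⁻¹ : ℝ) • z = WeakDual.toStrongDual e := by
    have hy' : y = WeakDual.toStrongDual e + WeakDual.toStrongDual e - z :=
      eq_sub_of_add_eq hsum
    rw [hy']
    module
  have hmid : (2⁻¹ : ℝ) • StrongDual.toWeakDual y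
      + (2⁻¹ : ℝ) • StrongDual.toWeakDual z = e := hmidC
  have hseg : e ∈ openSegment ℝ (StrongDual.toWeakDual y)
      (StrongDual.toWeakDual z) :=
    ⟨2⁻¹, 2⁻¹, by norm_num, by norm_num, by norm_num, hmid⟩
  obtain ⟨h1, h2⟩ := he.2 _ hys _ hzs hseg
  exact ⟨h1, h2⟩

variable {k : ℕ} (L : ContinuousMultilinearMap 𝕂 (fun _ : Fin k => X) Y)

lemma polyEval_continuous' : Continuous (polyEval L) :=
  L.cont.comp (continuous_pi fun _ => continuous_id)

lemma polyEval_smul' (c : 𝕂) (x : X) : polyEval L (c • x) = c ^ k • polyEval L x := by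
  have := L.map_smul_univ (fun _ : Fin k => c) (fun _ => x)
  simpa [polyEval, Finset.prod_const] using this

lemma norm_polyEval_le' {x : X} (hx : x ∈ Metric.closedBall (0 : X) 1) :
    ‖polyEval L x‖ ≤ ‖L‖ := by
  rw [mem_closedBall_zero_iff] at hx
  calc ‖L (fun _ => x)‖ ≤ ‖L‖ * ∏ _i : Fin k, ‖x‖ := L.le_opNorm _
    _ ≤ ‖L‖ * 1 := by
        have := Finset.prod_le_one (s := Finset.univ)
          (fun (_ : Fin k) _ => norm_nonneg x) (fun _ _ => hx)
        exact mul_le_mul_of_nonneg_left this (norm_nonneg L)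
    _ = ‖L‖ := mul_one _

lemma bddAbove_polyEval' :
    BddAbove ((fun x => ‖polyEval L x‖) '' Metric.closedBall (0 : X) 1) := by
  refine ⟨‖L‖, ?_⟩
  rintro r ⟨x, hx, rfl⟩
  exact norm_polyEval_le' L hx

lemma nonempty_polyEval_img' :
    ((fun x => ‖polyEval L x‖) '' Metric.closedBall (0 : X) 1).Nonempty :=
  ⟨_, ⟨0, mem_closedBall_self zero_le_one, rfl⟩⟩

lemma norm_le_supNorm_polyEval' {x : X} (hx : x ∈ Metric.closedBall (0 : X) 1) :
    ‖polyEval L x‖ ≤ supNorm (polyEval L) :=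
  le_csSup (bddAbove_polyEval' L) ⟨x, hx, rfl⟩

lemma supNorm_polyEval_le' {C : ℝ}
    (hC : ∀ x ∈ Metric.closedBall (0 : X) 1, ‖polyEval L x‖ ≤ C) :
    supNorm (polyEval L) ≤ C := by
  refine csSup_le (nonempty_polyEval_img' L) ?_
  rintro r ⟨x, hx, rfl⟩
  exact hC x hx

/-- Strong attainment implies `x₀` lies in the ball and the norm is attained at `x₀`. -/
lemma stronglyAttains_attains' {x₀ : X} (h : StronglyAttains 𝕂 (polyEval L) x₀) :
    x₀ ∈ Metric.closedBall (0 : X) 1 ∧ ‖polyEval L x₀‖ = supNorm (polyEval L) := by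
  obtain ⟨u, -, hu, hmem⟩ := exists_seq_tendsto_sSup (nonempty_polyEval_img' L)
    (bddAbove_polyEval' L)
  choose xs hxs hfxs using hmem
  have hten : Tendsto (fun n => ‖polyEval L (xs n)‖) atTop (nhds (supNorm (polyEval L))) := by
    have : (fun n => ‖polyEval L (xs n)‖) = u := funext hfxs
    rw [this]
    exact hu
  obtain ⟨α, φ, hφ, hα, hlim⟩ := h xs hxs hten
  have hball : α • x₀ ∈ Metric.closedBall (0 : X) 1 :=
    Metric.isClosed_closedBall.mem_of_tendsto hlim (Eventually.of_forall fun n => hxs _)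
  have hx₀ : x₀ ∈ Metric.closedBall (0 : X) 1 := by
    rw [mem_closedBall_zero_iff] at hball ⊢
    rwa [norm_smul, hα, one_mul] at hball
  refine ⟨hx₀, ?_⟩
  have hc : Tendsto (fun n => ‖polyEval L (xs (φ n))‖) atTop (nhds ‖polyEval L (α • x₀)‖) :=
    (((polyEval_continuous' L).tendsto _).comp hlim).norm
  have hsb : Tendsto (fun n => ‖polyEval L (xs (φ n))‖) atTop (nhds (supNorm (polyEval L))) :=
    hten.comp hφ.tendsto_atTop
  have heq : ‖polyEval L (α • x₀)‖ = supNorm (polyEval L) := tendsto_nhds_unique hc hsb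
  rw [polyEval_smul', norm_smul, norm_pow, hα, one_pow, one_mul] at heq
  exact heq

/-- If an `X`-valued polynomial strongly attains its norm at `x₀` and a norm-one functional
norms its value there, then `x₀ ∈ ρ̃𝒫(ᵏX)`. -/
lemma mem_polyAttainPts_of' (Q : ContinuousMultilinearMap 𝕂 (fun _ : Fin k => X) X)
    {x₀ : X} (hQatt : StronglyAttains 𝕂 (polyEval Q) x₀)
    (e : X →L[𝕂] 𝕂) (he1 : ‖e‖ ≤ 1)
    (hev : e (polyEval Q x₀) = (‖polyEval Q x₀‖ : 𝕂)) (hQ0 : polyEval Q x₀ ≠ 0) :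
    x₀ ∈ polyAttainPts 𝕂 X k := by
  obtain ⟨hx₀ball, hnorm⟩ := stronglyAttains_attains' Q hQatt
  set L' := e.compContinuousMultilinearMap Q with hL'
  have hpe : ∀ x, polyEval L' x = e (polyEval Q x) := fun x => rfl
  have hlow : ∀ x, ‖polyEval L' x‖ ≤ ‖polyEval Q x‖ := by
    intro x
    rw [hpe]
    calc ‖e (polyEval Q x)‖ ≤ ‖e‖ * ‖polyEval Q x‖ := e.le_opNorm _
      _ ≤ 1 * ‖polyEval Q x‖ := mul_le_mul_of_nonneg_right he1 (norm_nonneg _)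
      _ = ‖polyEval Q x‖ := one_mul _
  have hbound : ∀ x ∈ Metric.closedBall (0 : X) 1,
      ‖polyEval L' x‖ ≤ supNorm (polyEval Q) := fun x hx =>
    (hlow x).trans (norm_le_supNorm_polyEval' Q hx)
  have hval : ‖polyEval L' x₀‖ = supNorm (polyEval Q) := by
    rw [hpe, hev, RCLike.norm_ofReal, abs_of_nonneg (norm_nonneg _), hnorm]
  have hsup : supNorm (polyEval L') = supNorm (polyEval Q) := by
    refine le_antisymm (supNorm_polyEval_le' L' hbound) ?_
    rw [← hval]
    exact norm_le_supNorm_polyEval' L' hx₀ball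
  refine ⟨hx₀ball, L', ?_, ?_⟩
  · intro hcontra
    apply hQ0
    have h0 : polyEval L' x₀ = 0 := congrFun hcontra x₀
    have h1 : ‖polyEval Q x₀‖ = 0 := by
      rw [hnorm, ← hval, h0, norm_zero]
    exact norm_eq_zero.mp h1
  · intro xs hxs hten
    rw [hsup] at hten
    have hmax : Tendsto (fun n => ‖polyEval Q (xs n)‖) atTop
        (nhds (supNorm (polyEval Q))) := by
      refine tendsto_of_tendsto_of_tendsto_of_le_of_le hten tendsto_const_nhds ?_ ?_
      · intro n; exact hlow (xs n)
      · intro n; exact norm_le_supNorm_polyEval' Q (hxs n)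
    exact hQatt xs hxs hmax

end Statement6Aux

section Statement6Key

variable {𝕂 X : Type*} [RCLike 𝕂] [NormedAddCommGroup X] [NormedSpace 𝕂 X]
  [CompleteSpace X] {k : ℕ}

lemma numRadius_eq_one'
    (happrox : ∀ P : ContinuousMultilinearMap 𝕂 (fun _ : Fin k => X) X, ∀ ε > (0 : ℝ),
      ∃ (Q : ContinuousMultilinearMap 𝕂 (fun _ : Fin k => X) X) (x₀ : X),
        StronglyAttains 𝕂 (polyEval Q) x₀ ∧
          ∀ x ∈ Metric.closedBall (0 : X) 1, ‖polyEval P x - polyEval Q x‖ ≤ ε)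
    (hext : ∀ x ∈ polyAttainPts 𝕂 X k, ∀ x' : X →L[𝕂] 𝕂,
      IsExtremePt (Metric.closedBall (0 : X →L[𝕂] 𝕂) 1) x' → ‖x' x‖ = 1)
    (P : ContinuousMultilinearMap 𝕂 (fun _ : Fin k => X) X)
    (hP : supNorm (polyEval P) = 1) : numRadius 𝕂 (polyEval P) = 1 := by
  set N := {r | ∃ (x : X) (x' : X →L[𝕂] 𝕂),
    ‖x‖ = 1 ∧ ‖x'‖ = 1 ∧ x' x = 1 ∧ r = ‖x' (polyEval P x)‖} with hNdef
  have hNle : ∀ r ∈ N, r ≤ 1 := by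
    rintro r ⟨x, x', hx, hx', -, rfl⟩
    have hxball : x ∈ Metric.closedBall (0 : X) 1 := by
      rw [mem_closedBall_zero_iff, hx]
    calc ‖x' (polyEval P x)‖ ≤ ‖x'‖ * ‖polyEval P x‖ := x'.le_opNorm _
      _ ≤ 1 * 1 := mul_le_mul (le_of_eq hx')
          ((norm_le_supNorm_polyEval' P hxball).trans (le_of_eq hP))
          (norm_nonneg _) zero_le_one
      _ = 1 := one_mul _
  have hbdd : BddAbove N := ⟨1, hNle⟩
  have hstep : ∀ ε : ℝ, 0 < ε → ε < 1 → ∃ r ∈ N, 1 - 2 * ε ≤ r := by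
    intro ε hε hε1
    obtain ⟨Q, x₀, hQatt, hQP⟩ := happrox P ε hε
    obtain ⟨hx₀ball, hQx₀⟩ := stronglyAttains_attains' Q hQatt
    have hsupQ : 1 - ε ≤ supNorm (polyEval Q) := by
      have hle : supNorm (polyEval P) ≤ supNorm (polyEval Q) + ε := by
        refine supNorm_polyEval_le' P ?_
        intro x hx
        have h1 : ‖polyEval P x‖ - ‖polyEval Q x‖ ≤ ‖polyEval P x - polyEval Q x‖ :=
          norm_sub_norm_le _ _
        have h2 := hQP x hx
        have h3 := norm_le_supNorm_polyEval' Q hx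
        linarith
      linarith [hP ▸ hle]
    set v := polyEval Q x₀ with hvdef
    have hvnorm : ‖v‖ = supNorm (polyEval Q) := hQx₀
    have hvpos : 0 < ‖v‖ := by rw [hvnorm]; linarith
    have hv : v ≠ 0 := by
      intro h0
      rw [h0, norm_zero] at hvpos
      exact lt_irrefl 0 hvpos
    obtain ⟨e, heext, hev⟩ := exists_extreme_functional' (𝕂 := 𝕂) v hv
    have he1 : ‖e‖ ≤ 1 := mem_closedBall_zero_iff.mp heext.1
    have hmem : x₀ ∈ polyAttainPts 𝕂 X k := mem_polyAttainPts_of' Q hQatt e he1 hev hv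
    have hex₀ : ‖e x₀‖ = 1 := hext x₀ hmem e heext
    have hx₀le : ‖x₀‖ ≤ 1 := mem_closedBall_zero_iff.mp hx₀ball
    have hx₀1 : ‖x₀‖ = 1 := by
      have h1 : ‖e x₀‖ ≤ ‖e‖ * ‖x₀‖ := e.le_opNorm x₀
      have h3 : ‖e‖ * ‖x₀‖ ≤ ‖x₀‖ := mul_le_of_le_one_left (norm_nonneg x₀) he1
      linarith [hex₀ ▸ h1]
    have he_norm1 : ‖e‖ = 1 := by
      have h1 : ‖e x₀‖ ≤ ‖e‖ * ‖x₀‖ := e.le_opNorm x₀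
      rw [hex₀, hx₀1, mul_one] at h1
      exact le_antisymm he1 h1
    set c : 𝕂 := e x₀ with hcdef
    have hc : ‖c‖ = 1 := hex₀
    have hc0 : c ≠ 0 := by
      intro h
      rw [h, norm_zero] at hc
      exact zero_ne_one hc
    set x' : X →L[𝕂] 𝕂 := c⁻¹ • e with hx'def
    have hx'app : ∀ w : X, x' w = c⁻¹ * e w := fun w => rfl
    have hx'norm : ‖x'‖ = 1 := by
      rw [hx'def, norm_smul c⁻¹ e, norm_inv, hc, inv_one, one_mul, he_norm1]
    have hx'x : x' x₀ = 1 := by rw [hx'app]; exact inv_mul_cancel₀ hc0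
    refine ⟨‖x' (polyEval P x₀)‖, ⟨x₀, x', hx₀1, hx'norm, hx'x, rfl⟩, ?_⟩
    have h1 : ‖x' (polyEval P x₀)‖ = ‖e (polyEval P x₀)‖ := by
      rw [hx'app, norm_mul, norm_inv, hc, inv_one, one_mul]
    have h2 : ‖e v‖ = ‖v‖ := by
      rw [hev, RCLike.norm_ofReal, abs_of_nonneg (norm_nonneg v)]
    have h3 : ‖e (polyEval P x₀) - e v‖ ≤ ε := by
      rw [← map_sub]
      calc ‖e (polyEval P x₀ - v)‖ ≤ ‖e‖ * ‖polyEval P x₀ - v‖ := e.le_opNorm _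
        _ ≤ 1 * ε := mul_le_mul he1 (hQP x₀ hx₀ball) (norm_nonneg _) zero_le_one
        _ = ε := one_mul _
    have h4 : ‖e v‖ - ‖e (polyEval P x₀)‖ ≤ ‖e v - e (polyEval P x₀)‖ :=
      norm_sub_norm_le _ _
    rw [norm_sub_rev] at h4
    have h5 : 1 - ε ≤ ‖e v‖ := by rw [h2, hvnorm]; exact hsupQ
    rw [h1]
    linarith
  obtain ⟨r₀, hr₀N, hr₀⟩ := hstep (1 / 2) (by norm_num) (by norm_num)
  have hne : N.Nonempty := ⟨r₀, hr₀N⟩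
  have hle : sSup N ≤ 1 := csSup_le hne hNle
  have hge : 1 ≤ sSup N := by
    by_contra h
    push_neg at h
    have h0 : 0 ≤ sSup N := le_trans (by linarith) (le_csSup hbdd hr₀N)
    set ε := (1 - sSup N) / 4 with hεdef
    obtain ⟨r, hrN, hr⟩ := hstep ε (by rw [hεdef]; linarith) (by rw [hεdef]; linarith)
    have hrs := le_csSup hbdd hrN
    rw [hεdef] at hr
    linarith
  have hNR : numRadius 𝕂 (polyEval P) = sSup N := rfl
  rw [hNR]
  exact le_antisymm hle hge

end Statement6Key

/-- if every `P ∈ 𝒫(ᵏX : X)` is a limit of strongly norm-attaining polynomials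
and `|x*(x)| = 1` for all `x ∈ ρ̃𝒫(ᵏX)` and extreme `x*` of `B_{X*}`, then `n^(k)(X) = 1`. -/
theorem statement6 {𝕂 X : Type*} [RCLike 𝕂] [NormedAddCommGroup X] [NormedSpace 𝕂 X]
    [CompleteSpace X] [Nontrivial X] {k : ℕ} (hk : 1 ≤ k)
    (happrox : ∀ P : ContinuousMultilinearMap 𝕂 (fun _ : Fin k => X) X, ∀ ε > (0 : ℝ),
      ∃ (Q : ContinuousMultilinearMap 𝕂 (fun _ : Fin k => X) X) (x₀ : X),
        StronglyAttains 𝕂 (polyEval Q) x₀ ∧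
          ∀ x ∈ Metric.closedBall (0 : X) 1, ‖polyEval P x - polyEval Q x‖ ≤ ε)
    (hext : ∀ x ∈ polyAttainPts 𝕂 X k, ∀ x' : X →L[𝕂] 𝕂,
      IsExtremePt (Metric.closedBall (0 : X →L[𝕂] 𝕂) 1) x' → ‖x' x‖ = 1) :
    polyNumIndex 𝕂 X k = 1 := by
  classical
  have hall : ∀ r ∈ {r | ∃ L : ContinuousMultilinearMap 𝕂 (fun _ : Fin k => X) X,
      supNorm (polyEval L) = 1 ∧ r = numRadius 𝕂 (polyEval L)}, r = 1 := by
    rintro r ⟨L, hL1, rfl⟩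
    exact numRadius_eq_one' happrox hext L hL1
  have hne : {r | ∃ L : ContinuousMultilinearMap 𝕂 (fun _ : Fin k => X) X,
      supNorm (polyEval L) = 1 ∧ r = numRadius 𝕂 (polyEval L)}.Nonempty := by
    obtain ⟨u, hu⟩ := exists_ne (0 : X)
    have hun : ‖u‖ ≠ 0 := norm_ne_zero_iff.mpr hu
    set u₁ : X := ((‖u‖⁻¹ : ℝ) : 𝕂) • u with hu₁def
    have hu₁n : ‖u₁‖ = 1 := by
      rw [hu₁def, norm_smul, RCLike.norm_ofReal, abs_of_nonneg (inv_nonneg.mpr (norm_nonneg u))]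
      exact inv_mul_cancel₀ hun
    have hu₁0 : u₁ ≠ 0 := by
      intro h
      rw [h, norm_zero] at hu₁n
      exact zero_ne_one hu₁n
    obtain ⟨g, hg1, hgu⟩ := exists_dual_vector 𝕂 u₁ (norm_ne_zero_iff.mpr hu₁0)
    set L₀ := ((ContinuousMultilinearMap.mkPiAlgebra 𝕂 (Fin k) 𝕂).compContinuousLinearMap
      (fun _ => g)).smulRight u₁ with hL₀def
    have happ : ∀ x : X, polyEval L₀ x = (g x) ^ k • u₁ := by
      intro x
      show ((ContinuousMultilinearMap.mkPiAlgebra 𝕂 (Fin k) 𝕂).compContinuousLinearMap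
        (fun _ => g)) (fun _ => x) • u₁ = (g x) ^ k • u₁
      congr 1
      simp [Finset.prod_const]
    have hnorm : ∀ x : X, ‖polyEval L₀ x‖ = ‖g x‖ ^ k := by
      intro x
      rw [happ, norm_smul, norm_pow, hu₁n, mul_one]
    have hsup : supNorm (polyEval L₀) = 1 := by
      refine le_antisymm (supNorm_polyEval_le' L₀ ?_) ?_
      · intro x hx
        rw [hnorm]
        refine pow_le_one₀ (norm_nonneg _) ?_
        calc ‖g x‖ ≤ ‖g‖ * ‖x‖ := g.le_opNorm x
          _ ≤ 1 * 1 := mul_le_mul (le_of_eq hg1) (mem_closedBall_zero_iff.mp hx)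
              (norm_nonneg _) zero_le_one
          _ = 1 := one_mul _
      · have h1 : (1 : ℝ) = ‖polyEval L₀ u₁‖ := by
          rw [hnorm, hgu, RCLike.norm_ofReal, abs_of_nonneg (norm_nonneg _), hu₁n, one_pow]
        rw [h1]
        exact norm_le_supNorm_polyEval' L₀ (by rw [mem_closedBall_zero_iff, hu₁n])
    exact ⟨numRadius 𝕂 (polyEval L₀), L₀, hsup, rfl⟩
  have hsing : {r | ∃ L : ContinuousMultilinearMap 𝕂 (fun _ : Fin k => X) X,
      supNorm (polyEval L) = 1 ∧ r = numRadius 𝕂 (polyEval L)} = {1} :=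
    Set.eq_singleton_iff_nonempty_unique_mem.mpr ⟨hne, hall⟩
  have hPNI : polyNumIndex 𝕂 X k
      = sInf {r | ∃ L : ContinuousMultilinearMap 𝕂 (fun _ : Fin k => X) X,
        supNorm (polyEval L) = 1 ∧ r = numRadius 𝕂 (polyEval L)} := rfl
  rw [hPNI, hsing, csInf_singleton]
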